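/- Let V be a real vector space of finite dimension k ≥ 1. Let v₁, …, v_k ∈ V be linearly independent and let λ₁, …, λ_k be linear functionals on V satisfying λᵢ(vⱼ) = δᵢⱼ for all 1 ≤ i, j ≤ k. For each sign vector σ = (σ₁, …, σ_k) ∈ {−1, 1}^k set V_σ := {v ∈ V : sign(λᵢ(v)) = σᵢ for all i = 1, …, k}. Then for any choice of one vector v_σ ∈ V_σ for each σ ∈ {−1, 1}^k, the real span of {v_σ : σ ∈ {−1, 1}^k} equals V. -/

import Mathlib

/-- Lemma: let `V` be a `k`-dimensional real vector space (`k ≥ 1`), `v₁, …, v_k`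
linearly independent, and `λ₁, …, λ_k` linear functionals with `λᵢ(vⱼ) = δᵢⱼ`.
For each sign vector `σ ∈ {-1,1}^k` let `V_σ = {v : sign(λᵢ(v)) = σᵢ ∀ i}`.
Then any choice of one vector from each `V_σ` spans `V`. -/
theorem span_of_sign_vectors
    {V : Type*} [AddCommGroup V] [Module ℝ V] [FiniteDimensional ℝ V]
    (k : ℕ) (hk : 1 ≤ k) (hdim : Module.finrank ℝ V = k)
    (v : Fin k → V) (hv : LinearIndependent ℝ v)
    (lam : Fin k → (V →ₗ[ℝ] ℝ))
    (hlam : ∀ i j, lam i (v j) = if i = j then 1 else 0)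
    (c : (Fin k → ℝ) → V)
    (hc : ∀ σ : Fin k → ℝ, (∀ i, σ i = 1 ∨ σ i = -1) →
      ∀ i, Real.sign (lam i (c σ)) = σ i) :
    Submodule.span ℝ (c '' {σ : Fin k → ℝ | ∀ i, σ i = 1 ∨ σ i = -1}) = ⊤ := by
  classical
  by_contra hne
  have hlt : Submodule.span ℝ (c '' {σ : Fin k → ℝ | ∀ i, σ i = 1 ∨ σ i = -1}) < ⊤ :=
    lt_top_iff_ne_top.mpr hne
  obtain ⟨f, hf0, hfbot⟩ := Submodule.exists_dual_map_eq_bot_of_lt_top hlt inferInstance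
  have hvanish : ∀ x ∈ (c '' {σ : Fin k → ℝ | ∀ i, σ i = 1 ∨ σ i = -1}), f x = 0 := by
    intro x hx
    have : f x ∈ Submodule.map f (Submodule.span ℝ _) :=
      Submodule.mem_map_of_mem (Submodule.subset_span hx)
    rw [hfbot] at this
    simpa using this
  -- basis from v
  haveI : Nonempty (Fin k) := ⟨⟨0, hk⟩⟩
  have hcard : Fintype.card (Fin k) = Module.finrank ℝ V := by simp [hdim]
  let b : Module.Basis (Fin k) ℝ V := basisOfLinearIndependentOfCardEqFinrank hv hcard
  have hb : ∀ j, b j = v j := fun j => by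
    simp [b, coe_basisOfLinearIndependentOfCardEqFinrank]
  -- f = ∑ f(v i) • lam i
  have hdecomp : ∀ x : V, f x = ∑ i, f (v i) * lam i x := by
    have : f = ∑ i, f (v i) • lam i := by
      apply b.ext
      intro j
      simp only [hb, LinearMap.coe_sum, Finset.sum_apply, LinearMap.smul_apply, hlam,
        smul_eq_mul, mul_ite, mul_one, mul_zero]
      simp
    intro x
    conv_lhs => rw [this]
    simp
  -- pick the adapted sign vector
  set σ : Fin k → ℝ := fun i => if 0 < f (v i) then (-1 : ℝ) else 1 with hσdef
  have hσ : ∀ i, σ i = 1 ∨ σ i = -1 := by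
    intro i; by_cases h : 0 < f (v i) <;> simp [hσdef, h]
  have hmem : c σ ∈ c '' {σ : Fin k → ℝ | ∀ i, σ i = 1 ∨ σ i = -1} :=
    Set.mem_image_of_mem _ hσ
  have hsum : ∑ i, f (v i) * lam i (c σ) = 0 := by
    rw [← hdecomp]; exact hvanish _ hmem
  have hsign := hc σ hσ
  have hlamlt : ∀ i, σ i = -1 → lam i (c σ) < 0 := by
    intro i hi
    rcases lt_trichotomy (lam i (c σ)) 0 with h' | h' | h'
    · exact h'
    · have h2 := hsign i; rw [h', Real.sign_zero, hi] at h2; norm_num at h2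
    · have h2 := hsign i; rw [Real.sign_of_pos h', hi] at h2; norm_num at h2
  have hlamgt : ∀ i, σ i = 1 → 0 < lam i (c σ) := by
    intro i hi
    rcases lt_trichotomy (lam i (c σ)) 0 with h' | h' | h'
    · have h2 := hsign i; rw [Real.sign_of_neg h', hi] at h2; norm_num at h2
    · have h2 := hsign i; rw [h', Real.sign_zero, hi] at h2; norm_num at h2
    · exact h'
  have hterm : ∀ i ∈ Finset.univ, f (v i) * lam i (c σ) ≤ 0 := by
    intro i _
    by_cases h : 0 < f (v i)
    · have hi : σ i = -1 := by simp [hσdef, h]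
      exact mul_nonpos_of_nonneg_of_nonpos h.le (hlamlt i hi).le
    · push_neg at h
      have hi : σ i = 1 := by simp [hσdef, not_lt.mpr h]
      exact mul_nonpos_of_nonpos_of_nonneg h (hlamgt i hi).le
  have hzero : ∀ i ∈ Finset.univ, f (v i) * lam i (c σ) = 0 :=
    (Finset.sum_eq_zero_iff_of_nonpos hterm).mp hsum
  have hfv : ∀ i, f (v i) = 0 := by
    intro i
    have hne' : lam i (c σ) ≠ 0 := by
      intro h
      have := hsign i
      rw [h, Real.sign_zero] at this
      rcases hσ i with h1 | h1 <;> rw [h1] at this <;> norm_num at this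
    have := hzero i (Finset.mem_univ i)
    exact (mul_eq_zero.mp this).resolve_right hne'
  apply hf0
  apply b.ext
  intro j
  simp [hb, hfv]
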